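/- Ordinary generating function of r-Stirling numbers: for fixed nonnegative integers k and r, Σ_{n≥k} {n+r brace k+r}_r t^n = t^k / Π_{j=0}^{k} (1 − (r+j)t), as an identity of formal power series in t. -/

import Mathlib

open Finset

/-- `𝒜` is a set partition of `Fin N`: blocks are nonempty and every element
lies in exactly one block. -/
def IsSetPartition {N : ℕ} (𝒜 : Finset (Finset (Fin N))) : Prop :=
  (∀ t ∈ 𝒜, t.Nonempty) ∧ ∀ x : Fin N, ∃! t, t ∈ 𝒜 ∧ x ∈ t

/-- The elements of `S` lie in pairwise distinct blocks of `𝒜`. -/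
def DistinctBlocks {N : ℕ} (𝒜 : Finset (Finset (Fin N))) (S : Set (Fin N)) : Prop :=
  ∀ a ∈ S, ∀ b ∈ S, a ≠ b → ∀ t ∈ 𝒜, ¬(a ∈ t ∧ b ∈ t)

/-- The `r`-Stirling number of the second kind `{n+r brace k+r}_r`: the number of
partitions of `{1,…,n+r}` into `k+r` nonempty blocks with `1,…,r` in distinct blocks. -/
noncomputable def rStirling (r n k : ℕ) : ℕ :=
  Nat.card {𝒜 : Finset (Finset (Fin (n + r))) //
    IsSetPartition 𝒜 ∧ 𝒜.card = k + r ∧ DistinctBlocks 𝒜 {x | (x : ℕ) < r}}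

/-- The `(r₁,r₂)`-Stirling number of the second kind `{n+r₁+r₂ brace k+r₂}_{r₁,r₂}`. -/
noncomputable def rrStirling (r₁ r₂ n k : ℕ) : ℕ :=
  Nat.card {𝒜 : Finset (Finset (Fin (n + r₁ + r₂))) //
    IsSetPartition 𝒜 ∧ 𝒜.card = k + r₂ ∧
    DistinctBlocks 𝒜 {x | (x : ℕ) < r₁} ∧
    DistinctBlocks 𝒜 {x | r₁ ≤ (x : ℕ) ∧ (x : ℕ) < r₁ + r₂}}

/-- The `r`-Bell polynomial `B_n(z;r) = Σ_{k=0}^n {n+r brace k+r}_r z^k`. -/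
noncomputable def rBell (r n : ℕ) (z : ℝ) : ℝ :=
  ∑ k ∈ range (n + 1), (rStirling r n k : ℝ) * z ^ k

/-- The `(r₁,r₂)`-Bell polynomial `B_n(z;r₁,r₂) = Σ_{k=0}^{n+r₁} {n+r₁+r₂ brace k+r₂}_{r₁,r₂} z^k`. -/
noncomputable def rrBell (r₁ r₂ n : ℕ) (z : ℝ) : ℝ :=
  ∑ k ∈ range (n + r₁ + 1), (rrStirling r₁ r₂ n k : ℝ) * z ^ k

namespace RSOGF

abbrev PT (M r b : ℕ) : Type :=
  {𝒜 : Finset (Finset (Fin M)) //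
    IsSetPartition 𝒜 ∧ 𝒜.card = b ∧ DistinctBlocks 𝒜 {x | (x : ℕ) < r}}

lemma rStirling_eq (r n k : ℕ) : rStirling r n k = Nat.card (PT (n + r) r (k + r)) := rfl

variable {m : ℕ}

def dn (t : Finset (Fin (m+1))) : Finset (Fin m) :=
  univ.filter (fun y => y.castSucc ∈ t)

def up (s : Finset (Fin m)) : Finset (Fin (m+1)) :=
  s.image Fin.castSucc

@[simp] lemma mem_dn {t : Finset (Fin (m+1))} {y : Fin m} : y ∈ dn t ↔ y.castSucc ∈ t := by
  simp [dn]

@[simp] lemma mem_up {s : Finset (Fin m)} {x : Fin (m+1)} :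
    x ∈ up s ↔ ∃ y ∈ s, Fin.castSucc y = x := by simp [up]

lemma last_not_mem_up (s : Finset (Fin m)) : Fin.last m ∉ up s := by
  simp only [mem_up]
  rintro ⟨y, -, hy⟩
  exact absurd hy (Fin.castSucc_lt_last y).ne

lemma up_injective : Function.Injective (up (m := m)) :=
  Finset.image_injective (Fin.castSucc_injective m)

@[simp] lemma dn_up (s : Finset (Fin m)) : dn (up s) = s := by
  ext y
  simp [Fin.castSucc_injective m |>.eq_iff]

lemma up_dn_erase (t : Finset (Fin (m+1))) : up (dn t) = t.erase (Fin.last m) := by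
  ext x
  simp only [mem_up, mem_dn, Finset.mem_erase]
  constructor
  · rintro ⟨y, hy, rfl⟩
    exact ⟨(Fin.castSucc_lt_last y).ne, hy⟩
  · rintro ⟨hne, hx⟩
    rcases Fin.exists_castSucc_eq.2 hne with ⟨y, rfl⟩
    exact ⟨y, hx, rfl⟩

lemma up_dn {t : Finset (Fin (m+1))} (h : Fin.last m ∉ t) : up (dn t) = t := by
  rw [up_dn_erase, Finset.erase_eq_self.2 h]

lemma dn_nonempty {t : Finset (Fin (m+1))} (ht : t.Nonempty) (h : t ≠ {Fin.last m}) :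
    (dn t).Nonempty := by
  by_contra hempty
  rw [Finset.not_nonempty_iff_eq_empty] at hempty
  have h2 : t.erase (Fin.last m) = ∅ := by
    rw [← up_dn_erase, hempty]; simp [up]
  rcases (Finset.erase_eq_empty_iff t (Fin.last m)).mp h2 with rfl | rfl
  · exact ht.ne_empty rfl
  · exact h rfl


lemma block_unique {N : ℕ} {𝒜 : Finset (Finset (Fin N))} (hp : IsSetPartition 𝒜)
    {t₁ t₂ : Finset (Fin N)} (h₁ : t₁ ∈ 𝒜) (h₂ : t₂ ∈ 𝒜) {x : Fin N}
    (hx₁ : x ∈ t₁) (hx₂ : x ∈ t₂) : t₁ = t₂ := by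
  obtain ⟨t, -, hu⟩ := hp.2 x
  rw [hu t₁ ⟨h₁, hx₁⟩, hu t₂ ⟨h₂, hx₂⟩]

lemma dist_ne_last {r : ℕ} (hr : r ≤ m) {a : Fin (m+1)} (ha : (a : ℕ) < r) :
    a ≠ Fin.last m := by
  intro h
  rw [h] at ha
  simp only [Fin.val_last] at ha
  omega

lemma dist_castSucc {r : ℕ} (hr : r ≤ m) {a : Fin (m+1)} (ha : (a : ℕ) < r) :
    ∃ y : Fin m, Fin.castSucc y = a ∧ (y : ℕ) < r := by
  obtain ⟨y, hy⟩ := Fin.exists_castSucc_eq.2 (dist_ne_last hr ha)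
  exact ⟨y, hy, by rw [← hy] at ha; simpa using ha⟩

def ins0 (𝒟 : Finset (Finset (Fin m))) : Finset (Finset (Fin (m+1))) :=
  insert {Fin.last m} (𝒟.image up)

def ins1 (𝒟 : Finset (Finset (Fin m))) (t : Finset (Fin m)) : Finset (Finset (Fin (m+1))) :=
  insert (insert (Fin.last m) (up t)) ((𝒟.erase t).image up)

lemma mem_ins0 {𝒟 : Finset (Finset (Fin m))} {t' : Finset (Fin (m+1))} :
    t' ∈ ins0 𝒟 ↔ t' = {Fin.last m} ∨ ∃ d ∈ 𝒟, up d = t' := by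
  simp [ins0, eq_comm]

lemma mem_ins1 {𝒟 : Finset (Finset (Fin m))} {t : Finset (Fin m)} {t' : Finset (Fin (m+1))} :
    t' ∈ ins1 𝒟 t ↔ t' = insert (Fin.last m) (up t) ∨ ∃ d ∈ 𝒟.erase t, up d = t' := by
  simp [ins1, eq_comm]

lemma ins0_part {𝒟 : Finset (Finset (Fin m))} (hp : IsSetPartition 𝒟) :
    IsSetPartition (ins0 𝒟) := by
  constructor
  · intro t' ht'
    rcases mem_ins0.1 ht' with rfl | ⟨d, hd, rfl⟩
    · exact ⟨Fin.last m, Finset.mem_singleton_self _⟩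
    · obtain ⟨y, hy⟩ := hp.1 d hd
      exact ⟨Fin.castSucc y, mem_up.2 ⟨y, hy, rfl⟩⟩
  · intro x
    refine Fin.lastCases ?_ ?_ x
    · refine ⟨{Fin.last m}, ⟨mem_ins0.2 (Or.inl rfl), Finset.mem_singleton_self _⟩, ?_⟩
      rintro t' ⟨ht', hL⟩
      rcases mem_ins0.1 ht' with rfl | ⟨d, hd, rfl⟩
      · rfl
      · exact absurd hL (last_not_mem_up d)
    · intro y
      obtain ⟨d, ⟨hd, hyd⟩, hu⟩ := hp.2 y
      refine ⟨up d, ⟨mem_ins0.2 (Or.inr ⟨d, hd, rfl⟩), mem_up.2 ⟨y, hyd, rfl⟩⟩, ?_⟩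
      rintro t' ⟨ht', hyt'⟩
      rcases mem_ins0.1 ht' with rfl | ⟨d', hd', rfl⟩
      · exact absurd (Finset.mem_singleton.1 hyt') (Fin.castSucc_lt_last y).ne
      · obtain ⟨y', hy'd, hy'⟩ := mem_up.1 hyt'
        have : y' = y := Fin.castSucc_injective m hy'
        subst this
        rw [hu d' ⟨hd', hy'd⟩]

lemma ins0_card {𝒟 : Finset (Finset (Fin m))} {b : ℕ} (hc : 𝒟.card = b) :
    (ins0 𝒟).card = b + 1 := by
  rw [ins0, Finset.card_insert_of_notMem, Finset.card_image_of_injective _ up_injective, hc]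
  intro h
  obtain ⟨d, -, hd⟩ := Finset.mem_image.1 h
  exact last_not_mem_up d (hd ▸ Finset.mem_singleton_self _)

lemma ins0_dist {r : ℕ} (hr : r ≤ m) {𝒟 : Finset (Finset (Fin m))}
    (hd : DistinctBlocks 𝒟 {x | (x : ℕ) < r}) :
    DistinctBlocks (ins0 𝒟) {x | (x : ℕ) < r} := by
  rintro a ha c hc hne t' ht' ⟨hat, hct⟩
  obtain ⟨a₀, rfl, ha₀⟩ := dist_castSucc hr ha
  obtain ⟨c₀, rfl, hc₀⟩ := dist_castSucc hr hc
  rcases mem_ins0.1 ht' with rfl | ⟨d, hdm, rfl⟩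
  · exact (Fin.castSucc_lt_last a₀).ne (Finset.mem_singleton.1 hat)
  · have hane : a₀ ≠ c₀ := fun h => hne (h ▸ rfl)
    obtain ⟨a₁, ha₁, ha₂⟩ := mem_up.1 hat
    obtain ⟨c₁, hc₁, hc₂⟩ := mem_up.1 hct
    exact hd a₀ ha₀ c₀ hc₀ hane d hdm
      ⟨Fin.castSucc_injective m ha₂ ▸ ha₁, Fin.castSucc_injective m hc₂ ▸ hc₁⟩

lemma ins1_part {𝒟 : Finset (Finset (Fin m))} {t : Finset (Fin m)}
    (hp : IsSetPartition 𝒟) (ht : t ∈ 𝒟) : IsSetPartition (ins1 𝒟 t) := by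
  constructor
  · intro t' ht'
    rcases mem_ins1.1 ht' with rfl | ⟨d, hd, rfl⟩
    · exact ⟨Fin.last m, Finset.mem_insert_self _ _⟩
    · obtain ⟨y, hy⟩ := hp.1 d (Finset.mem_of_mem_erase hd)
      exact ⟨Fin.castSucc y, mem_up.2 ⟨y, hy, rfl⟩⟩
  · intro x
    refine Fin.lastCases ?_ ?_ x
    · refine ⟨insert (Fin.last m) (up t),
        ⟨mem_ins1.2 (Or.inl rfl), Finset.mem_insert_self _ _⟩, ?_⟩
      rintro t' ⟨ht', hL⟩
      rcases mem_ins1.1 ht' with rfl | ⟨d, hd, rfl⟩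
      · rfl
      · exact absurd hL (last_not_mem_up d)
    · intro y
      obtain ⟨d, ⟨hd, hyd⟩, hu⟩ := hp.2 y
      rcases eq_or_ne d t with rfl | hdt
      · refine ⟨insert (Fin.last m) (up d),
          ⟨mem_ins1.2 (Or.inl rfl), Finset.mem_insert_of_mem (mem_up.2 ⟨y, hyd, rfl⟩)⟩, ?_⟩
        rintro t' ⟨ht', hyt'⟩
        rcases mem_ins1.1 ht' with rfl | ⟨d', hd', rfl⟩
        · rfl
        · obtain ⟨y', hy'd, hy'⟩ := mem_up.1 hyt'
          have h1 : y ∈ d' := Fin.castSucc_injective m hy' ▸ hy'd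
          exact absurd (hu d' ⟨Finset.mem_of_mem_erase hd', h1⟩)
            (Finset.ne_of_mem_erase hd')
      · refine ⟨up d, ⟨mem_ins1.2 (Or.inr ⟨d, Finset.mem_erase.2 ⟨hdt, hd⟩, rfl⟩),
          mem_up.2 ⟨y, hyd, rfl⟩⟩, ?_⟩
        rintro t' ⟨ht', hyt'⟩
        rcases mem_ins1.1 ht' with rfl | ⟨d', hd', rfl⟩
        · rcases Finset.mem_insert.1 hyt' with h | h
          · exact absurd h (Fin.castSucc_lt_last y).ne
          · obtain ⟨y', hy't, hy'⟩ := mem_up.1 h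
            have h1 : y ∈ t := Fin.castSucc_injective m hy' ▸ hy't
            exact absurd (hu t ⟨ht, h1⟩).symm hdt
        · obtain ⟨y', hy'd, hy'⟩ := mem_up.1 hyt'
          have h1 : y ∈ d' := Fin.castSucc_injective m hy' ▸ hy'd
          rw [hu d' ⟨Finset.mem_of_mem_erase hd', h1⟩]

lemma ins1_card {𝒟 : Finset (Finset (Fin m))} {t : Finset (Fin m)} (ht : t ∈ 𝒟) :
    (ins1 𝒟 t).card = 𝒟.card := by
  rw [ins1, Finset.card_insert_of_notMem, Finset.card_image_of_injective _ up_injective,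
    Finset.card_erase_of_mem ht]
  · have : 0 < 𝒟.card := Finset.card_pos.2 ⟨t, ht⟩
    omega
  · intro h
    obtain ⟨d, -, hd⟩ := Finset.mem_image.1 h
    exact last_not_mem_up d (hd ▸ Finset.mem_insert_self _ _)

lemma ins1_dist {r : ℕ} (hr : r ≤ m) {𝒟 : Finset (Finset (Fin m))} {t : Finset (Fin m)}
    (ht : t ∈ 𝒟) (hd : DistinctBlocks 𝒟 {x | (x : ℕ) < r}) :
    DistinctBlocks (ins1 𝒟 t) {x | (x : ℕ) < r} := by
  rintro a ha c hc hne t' ht' ⟨hat, hct⟩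
  obtain ⟨a₀, rfl, ha₀⟩ := dist_castSucc hr ha
  obtain ⟨c₀, rfl, hc₀⟩ := dist_castSucc hr hc
  have hane : a₀ ≠ c₀ := fun h => hne (h ▸ rfl)
  rcases mem_ins1.1 ht' with rfl | ⟨d, hdm, rfl⟩
  · rcases Finset.mem_insert.1 hat with h | h
    · exact (Fin.castSucc_lt_last a₀).ne h
    rcases Finset.mem_insert.1 hct with h' | h'
    · exact (Fin.castSucc_lt_last c₀).ne h'
    obtain ⟨a₁, ha₁, ha₂⟩ := mem_up.1 h
    obtain ⟨c₁, hc₁, hc₂⟩ := mem_up.1 h'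
    exact hd a₀ ha₀ c₀ hc₀ hane t ht
      ⟨Fin.castSucc_injective m ha₂ ▸ ha₁, Fin.castSucc_injective m hc₂ ▸ hc₁⟩
  · obtain ⟨a₁, ha₁, ha₂⟩ := mem_up.1 hat
    obtain ⟨c₁, hc₁, hc₂⟩ := mem_up.1 hct
    exact hd a₀ ha₀ c₀ hc₀ hane d (Finset.mem_of_mem_erase hdm)
      ⟨Fin.castSucc_injective m ha₂ ▸ ha₁, Fin.castSucc_injective m hc₂ ▸ hc₁⟩

lemma insert_inj {α : Type*} [DecidableEq α] {a : α} {s₁ s₂ : Finset α}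
    (h₁ : a ∉ s₁) (h₂ : a ∉ s₂) (h : insert a s₁ = insert a s₂) : s₁ = s₂ := by
  rw [← Finset.erase_insert h₁, ← Finset.erase_insert h₂, h]

lemma singleton_last_not_mem_ins1_parts {𝒟 : Finset (Finset (Fin m))} {t : Finset (Fin m)}
    (htne : t.Nonempty) : ({Fin.last m} : Finset (Fin (m+1))) ∉ ins1 𝒟 t := by
  intro h
  rcases mem_ins1.1 h with h' | ⟨d, -, hd⟩
  · obtain ⟨y, hy⟩ := htne
    have : Fin.castSucc y ∈ ({Fin.last m} : Finset (Fin (m+1))) := by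
      rw [h']
      exact Finset.mem_insert_of_mem (mem_up.2 ⟨y, hy, rfl⟩)
    exact (Fin.castSucc_lt_last y).ne (Finset.mem_singleton.1 this)
  · exact last_not_mem_up d (hd ▸ Finset.mem_singleton_self _)

lemma ins0_inj {𝒟₁ 𝒟₂ : Finset (Finset (Fin m))} (h : ins0 𝒟₁ = ins0 𝒟₂) : 𝒟₁ = 𝒟₂ := by
  have hL : ∀ 𝒟 : Finset (Finset (Fin m)), ({Fin.last m} : Finset (Fin (m+1))) ∉ 𝒟.image up := by
    intro 𝒟 h'
    obtain ⟨d, -, hd⟩ := Finset.mem_image.1 h'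
    exact last_not_mem_up d (hd ▸ Finset.mem_singleton_self _)
  exact Finset.image_injective up_injective (insert_inj (hL 𝒟₁) (hL 𝒟₂) h)

lemma ins1_inj {𝒟₁ 𝒟₂ : Finset (Finset (Fin m))} {t₁ t₂ : Finset (Fin m)}
    (h₁ : t₁ ∈ 𝒟₁) (h₂ : t₂ ∈ 𝒟₂) (h : ins1 𝒟₁ t₁ = ins1 𝒟₂ t₂) : 𝒟₁ = 𝒟₂ ∧ t₁ = t₂ := by
  have hmem : insert (Fin.last m) (up t₁) ∈ ins1 𝒟₂ t₂ := h ▸ mem_ins1.2 (Or.inl rfl)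
  have hTT : insert (Fin.last m) (up t₁) = insert (Fin.last m) (up t₂) := by
    rcases mem_ins1.1 hmem with h' | ⟨d, -, hd⟩
    · exact h'
    · exact absurd (hd ▸ Finset.mem_insert_self _ _) (last_not_mem_up d)
  have ht : t₁ = t₂ :=
    up_injective (insert_inj (last_not_mem_up t₁) (last_not_mem_up t₂) hTT)
  subst ht
  refine ⟨?_, rfl⟩
  have hnm : ∀ 𝒟 : Finset (Finset (Fin m)),
      insert (Fin.last m) (up t₁) ∉ (𝒟.erase t₁).image up := by
    intro 𝒟 h'
    obtain ⟨d, -, hd⟩ := Finset.mem_image.1 h'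
    exact last_not_mem_up d (hd ▸ Finset.mem_insert_self _ _)
  have := Finset.image_injective up_injective (insert_inj (hnm 𝒟₁) (hnm 𝒟₂) h)
  rw [← Finset.insert_erase h₁, ← Finset.insert_erase h₂, this]

variable (r) in
/-- The backward map of the recurrence bijection. -/
noncomputable def g (hr : r ≤ m) {b : ℕ} :
    PT m r b ⊕ (Σ d : PT m r (b+1), {t : Finset (Fin m) // t ∈ d.1}) → PT (m+1) r (b+1)
  | Sum.inl ⟨𝒟, hp, hc, hd⟩ => ⟨ins0 𝒟, ins0_part hp, ins0_card hc, ins0_dist hr hd⟩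
  | Sum.inr ⟨⟨𝒟, hp, hc, hd⟩, t, ht⟩ =>
      ⟨ins1 𝒟 t, ins1_part hp ht, by rw [ins1_card ht, hc], ins1_dist hr ht hd⟩

lemma g_injective (hr : r ≤ m) {b : ℕ} : Function.Injective (g r hr (b := b)) := by
  rintro (⟨𝒟₁, hp₁, hc₁, hd₁⟩ | ⟨⟨𝒟₁, hp₁, hc₁, hd₁⟩, t₁, ht₁⟩)
    (⟨𝒟₂, hp₂, hc₂, hd₂⟩ | ⟨⟨𝒟₂, hp₂, hc₂, hd₂⟩, t₂, ht₂⟩) h <;>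
    simp only [g, Subtype.mk.injEq] at h
  · simp only [Sum.inl.injEq, Subtype.mk.injEq]
    exact ins0_inj h
  · exact absurd (h ▸ mem_ins0.2 (Or.inl rfl))
      (singleton_last_not_mem_ins1_parts (hp₂.1 t₂ ht₂))
  · exact absurd (h.symm ▸ mem_ins0.2 (Or.inl rfl))
      (singleton_last_not_mem_ins1_parts (hp₁.1 t₁ ht₁))
  · obtain ⟨hD, htt⟩ := ins1_inj ht₁ ht₂ h
    subst hD; subst htt
    rfl

lemma g_surjective {r : ℕ} (hr : r ≤ m) {b : ℕ} : Function.Surjective (g r hr (b := b)) := by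
  rintro ⟨𝒜, hp, hc, hd⟩
  obtain ⟨T, ⟨hT, hLT⟩, hTu⟩ := hp.2 (Fin.last m)
  have hnl : ∀ t' ∈ 𝒜.erase T, Fin.last m ∉ t' := by
    intro t' ht' hL
    exact Finset.ne_of_mem_erase ht'
      (block_unique hp (Finset.mem_of_mem_erase ht') hT hL hLT)
  have hud : ∀ t' ∈ 𝒜.erase T, up (dn t') = t' := fun t' ht' => up_dn (hnl t' ht')
  have himg : ((𝒜.erase T).image dn).image up = 𝒜.erase T := by
    rw [Finset.image_image]
    exact (Finset.image_congr (fun t' ht' => hud t' (Finset.mem_coe.1 ht'))).trans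
      Finset.image_id
  have hinjOn : Set.InjOn dn ((𝒜.erase T : Finset (Finset (Fin (m+1)))) : Set (Finset (Fin (m+1)))) := by
    intro t₁ h₁ t₂ h₂ hdd
    rw [← hud t₁ (Finset.mem_coe.1 h₁), ← hud t₂ (Finset.mem_coe.1 h₂), hdd]
  have hcard' : ((𝒜.erase T).image dn).card = b := by
    rw [Finset.card_image_of_injOn hinjOn, Finset.card_erase_of_mem hT, hc]
    omega
  have hdist' : DistinctBlocks ((𝒜.erase T).image dn) {y : Fin m | (y : ℕ) < r} := by
    rintro a₀ ha₀ c₀ hc₀ hne d hdm ⟨had, hcd⟩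
    obtain ⟨t₃, ht₃, rfl⟩ := Finset.mem_image.1 hdm
    exact hd a₀.castSucc (by simpa using ha₀) c₀.castSucc (by simpa using hc₀)
      (fun h => hne (Fin.castSucc_injective m h)) t₃ (Finset.mem_of_mem_erase ht₃)
      ⟨mem_dn.1 had, mem_dn.1 hcd⟩
  by_cases hTL : T = {Fin.last m}
  · have hpart : IsSetPartition ((𝒜.erase T).image dn) := by
      constructor
      · intro d hdm
        obtain ⟨t₃, ht₃, rfl⟩ := Finset.mem_image.1 hdm
        exact dn_nonempty (hp.1 t₃ (Finset.mem_of_mem_erase ht₃))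
          (hTL ▸ Finset.ne_of_mem_erase ht₃)
      · intro y
        obtain ⟨t'', ⟨ht'', hyt''⟩, hu⟩ := hp.2 y.castSucc
        have ht''T : t'' ≠ T := by
          rintro rfl
          rw [hTL] at hyt''
          exact (Fin.castSucc_lt_last y).ne (Finset.mem_singleton.1 hyt'')
        refine ⟨dn t'', ⟨Finset.mem_image.2 ⟨t'', Finset.mem_erase.2 ⟨ht''T, ht''⟩, rfl⟩,
          mem_dn.2 hyt''⟩, ?_⟩
        rintro d ⟨hdm, hyd⟩
        obtain ⟨t₃, ht₃, rfl⟩ := Finset.mem_image.1 hdm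
        rw [hu t₃ ⟨Finset.mem_of_mem_erase ht₃, mem_dn.1 hyd⟩]
    refine ⟨Sum.inl ⟨(𝒜.erase T).image dn, hpart, hcard', hdist'⟩, ?_⟩
    apply Subtype.ext
    show ins0 ((𝒜.erase T).image dn) = 𝒜
    rw [ins0, himg, ← hTL, Finset.insert_erase hT]
  · have hT₀ : (dn T).Nonempty := dn_nonempty (hp.1 T hT) hTL
    have ht₀nm : dn T ∉ (𝒜.erase T).image dn := by
      intro hmem
      obtain ⟨t₃, ht₃, hdd⟩ := Finset.mem_image.1 hmem
      have ht₃e : t₃ = T.erase (Fin.last m) := by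
        rw [← hud t₃ ht₃, hdd, up_dn_erase]
      obtain ⟨y, hy⟩ := hp.1 t₃ (Finset.mem_of_mem_erase ht₃)
      have hyT : y ∈ T := Finset.mem_of_mem_erase (ht₃e ▸ hy)
      exact Finset.ne_of_mem_erase ht₃
        (block_unique hp (Finset.mem_of_mem_erase ht₃) hT hy hyT)
    have hpart : IsSetPartition (insert (dn T) ((𝒜.erase T).image dn)) := by
      constructor
      · intro d hdm
        rcases Finset.mem_insert.1 hdm with rfl | hdm'
        · exact hT₀
        · obtain ⟨t₃, ht₃, rfl⟩ := Finset.mem_image.1 hdm'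
          refine dn_nonempty (hp.1 t₃ (Finset.mem_of_mem_erase ht₃)) ?_
          rintro rfl
          exact hnl _ ht₃ (Finset.mem_singleton_self _)
      · intro y
        obtain ⟨t'', ⟨ht'', hyt''⟩, hu⟩ := hp.2 y.castSucc
        by_cases h'' : t'' = T
        · refine ⟨dn T, ⟨Finset.mem_insert_self _ _, mem_dn.2 (h'' ▸ hyt'')⟩, ?_⟩
          rintro d ⟨hdm, hyd⟩
          rcases Finset.mem_insert.1 hdm with rfl | hdm'
          · rfl
          · obtain ⟨t₃, ht₃, rfl⟩ := Finset.mem_image.1 hdm'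
            exact absurd ((hu t₃ ⟨Finset.mem_of_mem_erase ht₃, mem_dn.1 hyd⟩).trans h'')
              (Finset.ne_of_mem_erase ht₃)
        · refine ⟨dn t'', ⟨Finset.mem_insert_of_mem
            (Finset.mem_image.2 ⟨t'', Finset.mem_erase.2 ⟨h'', ht''⟩, rfl⟩),
            mem_dn.2 hyt''⟩, ?_⟩
          rintro d ⟨hdm, hyd⟩
          rcases Finset.mem_insert.1 hdm with rfl | hdm'
          · exact absurd (hu T ⟨hT, mem_dn.1 hyd⟩).symm h''
          · obtain ⟨t₃, ht₃, rfl⟩ := Finset.mem_image.1 hdm'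
            rw [hu t₃ ⟨Finset.mem_of_mem_erase ht₃, mem_dn.1 hyd⟩]
    have hcard𝒟 : (insert (dn T) ((𝒜.erase T).image dn)).card = b + 1 := by
      rw [Finset.card_insert_of_notMem ht₀nm, hcard']
    have hdist𝒟 : DistinctBlocks (insert (dn T) ((𝒜.erase T).image dn))
        {y : Fin m | (y : ℕ) < r} := by
      rintro a₀ ha₀ c₀ hc₀ hne d hdm ⟨had, hcd⟩
      rcases Finset.mem_insert.1 hdm with rfl | hdm'
      · exact hd a₀.castSucc (by simpa using ha₀) c₀.castSucc (by simpa using hc₀)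
          (fun h => hne (Fin.castSucc_injective m h)) T hT ⟨mem_dn.1 had, mem_dn.1 hcd⟩
      · exact hdist' a₀ ha₀ c₀ hc₀ hne d hdm' ⟨had, hcd⟩
    refine ⟨Sum.inr ⟨⟨insert (dn T) ((𝒜.erase T).image dn), hpart, hcard𝒟, hdist𝒟⟩,
      ⟨dn T, Finset.mem_insert_self _ _⟩⟩, ?_⟩
    apply Subtype.ext
    show ins1 (insert (dn T) ((𝒜.erase T).image dn)) (dn T) = 𝒜
    rw [ins1]
    have h1 : insert (Fin.last m) (up (dn T)) = T := by
      rw [up_dn_erase, Finset.insert_erase hLT]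
    have h2 : (insert (dn T) ((𝒜.erase T).image dn)).erase (dn T)
        = (𝒜.erase T).image dn := Finset.erase_insert ht₀nm
    rw [h1, h2, himg, Finset.insert_erase hT]

lemma card_PT_succ {m r b : ℕ} (hr : r ≤ m) :
    Nat.card (PT (m+1) r (b+1)) = Nat.card (PT m r b) + (b+1) * Nat.card (PT m r (b+1)) := by
  have hbij : Function.Bijective (g r hr (b := b)) := ⟨g_injective hr, g_surjective hr⟩
  rw [← Nat.card_eq_of_bijective _ hbij, Nat.card_sum]
  congr 1
  have e : (Σ d : PT m r (b+1), {t : Finset (Fin m) // t ∈ d.1}) ≃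
      (PT m r (b+1)) × Fin (b+1) := by
    refine (Equiv.sigmaCongrRight (fun d => ?_)).trans (Equiv.sigmaEquivProd _ _)
    exact Fintype.equivFinOfCardEq (by rw [Fintype.card_coe, d.2.2.1])
  rw [Nat.card_congr e, Nat.card_prod, Nat.card_eq_fintype_card (α := Fin (b+1)),
    Fintype.card_fin, mul_comm]

lemma card_PT_lt {M r b : ℕ} (hb : b < r) (hM : r ≤ M) : Nat.card (PT M r b) = 0 := by
  have : IsEmpty (PT M r b) := by
    constructor
    rintro ⟨𝒜, hp, hc, hd⟩
    have hf : ∀ i : Fin r, ∃ t, t ∈ 𝒜 ∧ (⟨(i : ℕ), lt_of_lt_of_le i.2 hM⟩ : Fin M) ∈ t :=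
      fun i => (hp.2 _).exists
    choose f hf1 hf2 using hf
    have hinj : Function.Injective (fun i => (⟨f i, hf1 i⟩ : {t // t ∈ 𝒜})) := by
      intro i j hij
      by_contra hne
      have hxy : (⟨(i : ℕ), lt_of_lt_of_le i.2 hM⟩ : Fin M) ≠ ⟨(j : ℕ), lt_of_lt_of_le j.2 hM⟩ := by
        simp only [ne_eq, Fin.mk.injEq]
        exact fun h => hne (Fin.ext h)
      simp only [Subtype.mk.injEq] at hij
      exact hd _ i.2 _ j.2 hxy (f i) (hf1 i) ⟨hf2 i, hij ▸ hf2 j⟩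
    have := Fintype.card_le_of_injective _ hinj
    rw [Fintype.card_fin, Fintype.card_coe, hc] at this
    omega
  exact Nat.card_of_isEmpty

lemma card_PT_gt {M r b : ℕ} (hb : M < b) : Nat.card (PT M r b) = 0 := by
  have : IsEmpty (PT M r b) := by
    constructor
    rintro ⟨𝒜, hp, hc, hd⟩
    have hf : ∀ t : {t // t ∈ 𝒜}, ∃ x : Fin M, x ∈ t.1 := fun t => hp.1 t.1 t.2
    choose f hf1 using hf
    have hinj : Function.Injective f := by
      intro t₁ t₂ h
      exact Subtype.ext (block_unique hp t₁.2 t₂.2 (hf1 t₁) (h ▸ hf1 t₂))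
    have := Fintype.card_le_of_injective _ hinj
    rw [Fintype.card_fin, Fintype.card_coe, hc] at this
    omega
  exact Nat.card_of_isEmpty

lemma card_PT_zero_blocks {M r : ℕ} (hM : 0 < M) : Nat.card (PT M r 0) = 0 := by
  have : IsEmpty (PT M r 0) := by
    constructor
    rintro ⟨𝒜, hp, hc, hd⟩
    obtain ⟨t, ⟨ht, -⟩, -⟩ := hp.2 ⟨0, hM⟩
    rw [Finset.card_eq_zero] at hc
    rw [hc] at ht
    exact absurd ht (Finset.notMem_empty t)
  exact Nat.card_of_isEmpty

lemma card_PT_diag {M r : ℕ} : Nat.card (PT M r M) = 1 := by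
  set 𝒜₀ : Finset (Finset (Fin M)) := univ.image (fun x : Fin M => ({x} : Finset (Fin M)))
    with h𝒜₀
  have hmem : ∀ t : Finset (Fin M), t ∈ 𝒜₀ ↔ ∃ x, t = {x} := by
    intro t
    simp [h𝒜₀, eq_comm]
  have hp₀ : IsSetPartition 𝒜₀ := by
    constructor
    · intro t ht
      obtain ⟨x, rfl⟩ := (hmem t).1 ht
      exact ⟨x, Finset.mem_singleton_self x⟩
    · intro x
      refine ⟨{x}, ⟨(hmem _).2 ⟨x, rfl⟩, Finset.mem_singleton_self x⟩, ?_⟩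
      rintro t ⟨ht, hxt⟩
      obtain ⟨y, rfl⟩ := (hmem t).1 ht
      rw [Finset.mem_singleton.1 hxt]
  have hc₀ : 𝒜₀.card = M := by
    rw [h𝒜₀, Finset.card_image_of_injective _ Finset.singleton_injective, Finset.card_univ,
      Fintype.card_fin]
  have hd₀ : DistinctBlocks 𝒜₀ {x : Fin M | (x : ℕ) < r} := by
    rintro a ha c hcc hne t ht ⟨hat, hct⟩
    obtain ⟨y, rfl⟩ := (hmem t).1 ht
    exact hne ((Finset.mem_singleton.1 hat).trans (Finset.mem_singleton.1 hct).symm)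
  rw [Nat.card_eq_one_iff_unique]
  refine ⟨⟨fun a₁ a₂ => ?_⟩, ⟨⟨𝒜₀, hp₀, hc₀, hd₀⟩⟩⟩
  suffices h : ∀ a : PT M r M, a.1 = 𝒜₀ by
    exact Subtype.ext ((h a₁).trans (h a₂).symm)
  rintro ⟨𝒜, hp, hc, hd⟩
  show 𝒜 = 𝒜₀
  -- every block has card 1
  have hdisj : (univ : Finset (Fin M)) = 𝒜.biUnion (fun t => t) := by
    ext x
    simp only [Finset.mem_univ, true_iff, Finset.mem_biUnion]
    obtain ⟨t, ⟨ht, hxt⟩, -⟩ := hp.2 x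
    exact ⟨t, ht, hxt⟩
  have hsum : ∑ t ∈ 𝒜, t.card = M := by
    rw [← Finset.card_biUnion, ← hdisj, Finset.card_univ, Fintype.card_fin]
    intro t₁ h₁ t₂ h₂ hne
    rw [Function.onFun, Finset.disjoint_left]
    intro x hx₁ hx₂
    exact hne (block_unique hp h₁ h₂ hx₁ hx₂)
  have hone : ∀ t ∈ 𝒜, t.card = 1 := by
    have hle : ∀ t ∈ 𝒜, 1 ≤ t.card := fun t ht => Finset.card_pos.2 (hp.1 t ht)
    have hsum1 : ∑ t ∈ 𝒜, 1 = ∑ t ∈ 𝒜, t.card := by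
      rw [Finset.sum_const, smul_eq_mul, mul_one, hc, hsum]
    intro t ht
    exact ((Finset.sum_eq_sum_iff_of_le hle).1 hsum1 t ht).symm
  apply Finset.eq_of_subset_of_card_le
  · intro t ht
    obtain ⟨x, rfl⟩ := Finset.card_eq_one.1 (hone t ht)
    exact (hmem _).2 ⟨x, rfl⟩
  · rw [hc₀, hc]

lemma rStirling_succ_succ (r n k : ℕ) :
    rStirling r (n+1) (k+1) = rStirling r n k + (r+k+1) * rStirling r n (k+1) := by
  rw [rStirling_eq, rStirling_eq, rStirling_eq,
    show n+1+r = (n+r)+1 from by omega, show k+1+r = (k+r)+1 from by omega,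
    card_PT_succ (Nat.le_add_left r n), show k+r+1 = r+k+1 from by omega]

lemma rStirling_succ_zero (r n : ℕ) : rStirling r (n+1) 0 = r * rStirling r n 0 := by
  cases r with
  | zero =>
    rw [rStirling_eq, card_PT_zero_blocks (Nat.succ_pos n), Nat.zero_mul]
  | succ r' =>
    rw [rStirling_eq, rStirling_eq,
      show n+1+(r'+1) = (n+(r'+1))+1 from by omega,
      show (0:ℕ)+(r'+1) = r'+1 from by omega,
      card_PT_succ (by omega : r'+1 ≤ n+(r'+1)),
      card_PT_lt (by omega : r' < r'+1) (by omega : r'+1 ≤ n+(r'+1)), Nat.zero_add]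

lemma rStirling_zero (r k : ℕ) : rStirling r 0 k = if k = 0 then 1 else 0 := by
  rcases Nat.eq_zero_or_pos k with rfl | hk
  · rw [if_pos rfl, rStirling_eq, show (0:ℕ)+r = r from by omega]
    exact card_PT_diag
  · rw [if_neg (by omega), rStirling_eq]
    exact card_PT_gt (by omega)

open PowerSeries in
lemma key (r k : ℕ) :
    (PowerSeries.mk fun n => (rStirling r n k : ℝ)) *
      (∏ j ∈ range (k + 1), (1 - PowerSeries.C ((r + j : ℕ) : ℝ) * PowerSeries.X)) =
      (PowerSeries.X : PowerSeries ℝ) ^ k := by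
  induction k with
  | zero =>
    rw [Finset.prod_range_one, pow_zero]
    ext n
    rw [mul_sub, mul_one, ← mul_assoc, mul_comm _ (PowerSeries.C _), mul_assoc]
    cases n with
    | zero =>
      simp [rStirling_zero, coeff_zero_eq_constantCoeff]
    | succ n =>
      simp only [map_sub, PowerSeries.coeff_mk, PowerSeries.coeff_C_mul,
        PowerSeries.coeff_succ_mul_X, PowerSeries.coeff_mk, PowerSeries.coeff_one,
        Nat.succ_ne_zero, if_false]
      rw [rStirling_succ_zero]
      push_cast
      ring
  | succ k ih =>
    have step : (PowerSeries.mk fun n => (rStirling r n (k+1) : ℝ)) *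
        (1 - PowerSeries.C ((r + (k+1) : ℕ) : ℝ) * PowerSeries.X) =
        PowerSeries.X * (PowerSeries.mk fun n => (rStirling r n k : ℝ)) := by
      ext n
      rw [mul_sub, mul_one, ← mul_assoc, mul_comm _ (PowerSeries.C _), mul_assoc]
      cases n with
      | zero =>
        simp [rStirling_zero, mul_comm PowerSeries.X]
      | succ n =>
        simp only [map_sub, PowerSeries.coeff_mk, PowerSeries.coeff_C_mul,
          PowerSeries.coeff_succ_mul_X, PowerSeries.coeff_mk,
          mul_comm PowerSeries.X, PowerSeries.coeff_succ_mul_X]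
        rw [rStirling_succ_succ]
        push_cast
        ring
    rw [Finset.prod_range_succ, ← mul_assoc, mul_right_comm, step, mul_assoc, ih,
      ← pow_succ']
end RSOGF

open PowerSeries in
/-- $\sum_{n} {n+r \brace k+r}_r t^n = t^k / \prod_{j=0}^k (1-(r+j)t)$. -/
theorem rStirling_ogf (k r : ℕ) :
    PowerSeries.mk (fun n => (rStirling r n k : ℝ)) =
      (PowerSeries.X : PowerSeries ℝ) ^ k *
        (∏ j ∈ range (k + 1),
          (1 - PowerSeries.C ((r + j : ℕ) : ℝ) * PowerSeries.X))⁻¹ := by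
  set P := ∏ j ∈ range (k + 1),
    (1 - PowerSeries.C ((r + j : ℕ) : ℝ) * PowerSeries.X) with hP
  have hc : PowerSeries.constantCoeff P ≠ 0 := by
    rw [hP, map_prod]
    have : ∀ j ∈ range (k+1),
        PowerSeries.constantCoeff (1 - PowerSeries.C ((r + j : ℕ) : ℝ) * PowerSeries.X)
          = 1 := by
      intro j _
      simp
    rw [Finset.prod_congr rfl this, Finset.prod_const_one]
    exact one_ne_zero
  have h1 : P * P⁻¹ = 1 := PowerSeries.mul_inv_cancel P hc
  calc PowerSeries.mk (fun n => (rStirling r n k : ℝ))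
      = PowerSeries.mk (fun n => (rStirling r n k : ℝ)) * (P * P⁻¹) := by rw [h1, mul_one]
    _ = (PowerSeries.mk (fun n => (rStirling r n k : ℝ)) * P) * P⁻¹ := by ring
    _ = (PowerSeries.X : PowerSeries ℝ) ^ k * P⁻¹ := by rw [RSOGF.key r k]
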